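/- Let n ≥ 2 and consider the permutations of {1, 2, …, 4n} given by η = (1,2,…,2n)(2n+1,2n+2,…,4n) and σ = ∏_{k=1}^{n} (k, 4n+1−k, n+k, 3n+1−k). Then the subgroup of the symmetric group generated by η and σ is isomorphic to the dicyclic group G_n of order 4n, via an isomorphism sending x to η and y to σ. -/

import Mathlib

namespace DicyclicAux

def ev (n m : ℕ) : ℕ := if m + 1 = 2*n then 0 else if m + 1 = 4*n then 2*n else m + 1
def sv (n m : ℕ) : ℕ := if m < 2*n then 4*n-1-m else if m < 3*n then 3*n-1-m else 5*n-1-m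
def cv (n m : ℕ) : ℕ := if m < n then m else if m < 2*n then m - n
  else if m < 3*n then 3*n-1-m else 4*n-1-m
def pv (n k m : ℕ) : ℕ := if m + k < 2*n then m + k else if m < 2*n then m + k - 2*n
  else if m + k < 4*n then m + k else m + k - 2*n

lemma ev_lt {n m : ℕ} (hn : 2 ≤ n) (hm : m < 4*n) : ev n m < 4*n := by
  unfold ev; split_ifs <;> omega

lemma sv_lt {n m : ℕ} (hn : 2 ≤ n) (hm : m < 4*n) : sv n m < 4*n := by
  unfold sv; split_ifs <;> omega

lemma pv_lt {n k m : ℕ} (hn : 2 ≤ n) (hk : k ≤ 2*n) (hm : m < 4*n) : pv n k m < 4*n := by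
  unfold pv; split_ifs <;> omega

section
variable {n : ℕ} (hn : 2 ≤ n) (f : ℕ → Fin (4 * n)) (hf : ∀ m : ℕ, (f m : ℕ) = m % (4 * n))

include hn hf

lemma fval' {m : ℕ} (hm : m < 4*n) : f m = ⟨m, hm⟩ :=
  Fin.ext (by rw [hf]; exact Nat.mod_eq_of_lt hm)

lemma eta_apply (η : Equiv.Perm (Fin (4 * n)))
    (hη : η = ((List.range (2 * n)).map f).formPerm *
              ((List.range (2 * n)).map (fun k => f (2 * n + k))).formPerm)
    (m : Fin (4*n)) : η m = ⟨ev n m.val, ev_lt hn m.isLt⟩ := by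
  set A : List (Fin (4*n)) := (List.range (2 * n)).map f with hA
  set B : List (Fin (4*n)) := (List.range (2 * n)).map (fun k => f (2 * n + k)) with hB
  have hAlen : A.length = 2*n := by simp [hA]
  have hBlen : B.length = 2*n := by simp [hB]
  have hAget : ∀ i (h : i < 2*n), A[i]'(by omega) = ⟨i, by omega⟩ := by
    intro i h
    simp only [hA, List.getElem_map, List.getElem_range]
    exact fval' hn f hf (by omega)
  have hBget : ∀ i (h : i < 2*n), B[i]'(by omega) = ⟨2*n + i, by omega⟩ := by
    intro i h
    simp only [hB, List.getElem_map, List.getElem_range]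
    exact fval' hn f hf (by omega)
  have hAnodup : A.Nodup := by
    rw [hA]
    refine List.Nodup.map_on ?_ List.nodup_range
    intro a ha b hb hab
    rw [List.mem_range] at ha hb
    have := congrArg Fin.val hab
    rw [hf, hf, Nat.mod_eq_of_lt (by omega), Nat.mod_eq_of_lt (by omega)] at this
    exact this
  have hBnodup : B.Nodup := by
    rw [hB]
    refine List.Nodup.map_on ?_ List.nodup_range
    intro a ha b hb hab
    rw [List.mem_range] at ha hb
    have := congrArg Fin.val hab
    rw [hf, hf, Nat.mod_eq_of_lt (by omega), Nat.mod_eq_of_lt (by omega)] at this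
    omega
  have hAmem : ∀ x : Fin (4*n), x ∈ A ↔ x.val < 2*n := by
    intro x
    constructor
    · intro hx
      rw [hA, List.mem_map] at hx
      obtain ⟨k, hk, rfl⟩ := hx
      rw [List.mem_range] at hk
      rw [hf, Nat.mod_eq_of_lt (by omega)]; omega
    · intro hx
      rw [hA, List.mem_map]
      exact ⟨x.val, List.mem_range.mpr hx, by rw [fval' hn f hf (by omega)]⟩
  have hBmem : ∀ x : Fin (4*n), x ∈ B ↔ 2*n ≤ x.val := by
    intro x
    constructor
    · intro hx
      rw [hB, List.mem_map] at hx
      obtain ⟨k, hk, rfl⟩ := hx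
      rw [List.mem_range] at hk
      rw [hf, Nat.mod_eq_of_lt (by omega)]; omega
    · intro hx
      rw [hB, List.mem_map]
      refine ⟨x.val - 2*n, List.mem_range.mpr (by omega), ?_⟩
      rw [fval' hn f hf (by omega : 2*n + (x.val - 2*n) < 4*n)]
      exact Fin.ext (by simp; omega)
  rw [hη, Equiv.Perm.mul_apply]
  rcases lt_or_ge m.val (2*n) with hm | hm
  · have hBfix : B.formPerm m = m :=
      List.formPerm_apply_of_notMem (by rw [hBmem]; omega)
    rw [hBfix]
    have hmA : m = A[m.val]'(by omega) := by rw [hAget m.val hm]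
    rw [hmA, List.formPerm_apply_getElem A hAnodup m.val (by omega)]
    have : (m.val + 1) % A.length < 2*n := by rw [hAlen]; exact Nat.mod_lt _ (by omega)
    rw [hAget _ this]
    apply Fin.ext
    simp only [hAlen, ev]
    rcases Nat.lt_or_ge (m.val+1) (2*n) with h | h
    · rw [Nat.mod_eq_of_lt h]; split_ifs <;> omega
    · have : m.val + 1 = 2*n := by omega
      rw [this, Nat.mod_self]; split_ifs <;> omega
  · have hmB : m = B[m.val - 2*n]'(by omega) := by
      rw [hBget (m.val - 2*n) (by omega)]; exact Fin.ext (by simp; omega)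
    rw [hmB, List.formPerm_apply_getElem B hBnodup (m.val - 2*n) (by omega)]
    have hlt : (m.val - 2*n + 1) % B.length < 2*n := by rw [hBlen]; exact Nat.mod_lt _ (by omega)
    rw [hBget _ hlt]
    rw [List.formPerm_apply_of_notMem (by rw [hAmem]; simp)]
    apply Fin.ext
    simp only [hBlen, ev]
    rcases Nat.lt_or_ge (m.val - 2*n + 1) (2*n) with h | h
    · rw [Nat.mod_eq_of_lt h]; split_ifs <;> omega
    · have : m.val - 2*n + 1 = 2*n := by omega
      rw [this, Nat.mod_self]; split_ifs <;> omega

lemma quad_apply {k : ℕ} (hk : k < n) (m : Fin (4*n)) :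
    (([k, 4*n-1-k, n+k, 3*n-1-k].map f).formPerm) m =
      if cv n m.val = k then ⟨sv n m.val, sv_lt hn m.isLt⟩ else m := by
  have hL : ([k, 4*n-1-k, n+k, 3*n-1-k].map f) =
      [⟨k, by omega⟩, ⟨4*n-1-k, by omega⟩, ⟨n+k, by omega⟩, ⟨3*n-1-k, by omega⟩] := by
    simp only [List.map_cons, List.map_nil]
    rw [fval' hn f hf, fval' hn f hf, fval' hn f hf, fval' hn f hf]
  set L : List (Fin (4*n)) :=
      [⟨k, by omega⟩, ⟨4*n-1-k, by omega⟩, ⟨n+k, by omega⟩, ⟨3*n-1-k, by omega⟩] with hLdef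
  have hnodup : L.Nodup := by
    simp [hLdef, Fin.ext_iff]
    omega
  have hlen : L.length = 4 := rfl
  rw [hL]
  split_ifs with h
  · have hm4 : m.val = k ∨ m.val = 4*n-1-k ∨ m.val = n+k ∨ m.val = 3*n-1-k := by
      have := m.isLt
      revert h; unfold cv; split_ifs <;> omega
    rcases hm4 with hm | hm | hm | hm
    · have hm0 : m = L[0] := Fin.ext hm
      rw [hm0, List.formPerm_apply_getElem L hnodup 0 (by omega)]
      apply Fin.ext
      have := m.isLt
      simp [hLdef, sv]
      split_ifs <;> omega
    · have hm0 : m = L[1] := Fin.ext hm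
      rw [hm0, List.formPerm_apply_getElem L hnodup 1 (by omega)]
      apply Fin.ext
      have := m.isLt
      simp [hLdef, sv]
      split_ifs <;> omega
    · have hm0 : m = L[2] := Fin.ext hm
      rw [hm0, List.formPerm_apply_getElem L hnodup 2 (by omega)]
      apply Fin.ext
      have := m.isLt
      simp [hLdef, sv]
      split_ifs <;> omega
    · have hm0 : m = L[3] := Fin.ext hm
      rw [hm0, List.formPerm_apply_getElem L hnodup 3 (by omega)]
      apply Fin.ext
      have := m.isLt
      simp [hLdef, sv]
      split_ifs <;> omega
  · have hm4 : m.val ≠ k ∧ m.val ≠ 4*n-1-k ∧ m.val ≠ n+k ∧ m.val ≠ 3*n-1-k := by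
      have := m.isLt
      revert h; unfold cv; split_ifs <;> omega
    apply List.formPerm_apply_of_notMem
    simp only [hLdef, List.mem_cons, List.not_mem_nil, or_false, Fin.ext_iff]
    push_neg
    exact hm4

lemma sigma_apply (σ : Equiv.Perm (Fin (4 * n)))
    (hσ : σ = ((List.range n).map (fun k =>
              ([k, 4 * n - 1 - k, n + k, 3 * n - 1 - k].map f).formPerm)).prod)
    (m : Fin (4*n)) : σ m = ⟨sv n m.val, sv_lt hn m.isLt⟩ := by
  have key : ∀ j, j ≤ n → ∀ m : Fin (4*n),
      (((List.range j).map (fun k =>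
        ([k, 4 * n - 1 - k, n + k, 3 * n - 1 - k].map f).formPerm)).prod) m =
      if cv n m.val < j then ⟨sv n m.val, sv_lt hn m.isLt⟩ else m := by
    intro j
    induction j with
    | zero => intro _ m; simp
    | succ j ih =>
      intro hj m
      rw [List.range_succ, List.map_append, List.prod_append, List.map_singleton,
        List.prod_singleton, Equiv.Perm.mul_apply]
      rw [quad_apply hn f hf (by omega : j < n) m]
      have hmlt := m.isLt
      by_cases h1 : cv n m.val = j
      · rw [if_pos h1, ih (by omega)]
        have hcv : cv n (sv n m.val) = cv n m.val := by
          unfold cv sv; split_ifs <;> omega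
        rw [if_neg (show ¬ cv n (⟨sv n m.val, sv_lt hn m.isLt⟩ : Fin (4*n)).val < j by simp only [hcv]; omega)]
        rw [if_pos (by omega)]
      · rw [if_neg h1, ih (by omega)]
        rcases Nat.lt_or_ge (cv n m.val) j with h2 | h2
        · rw [if_pos h2, if_pos (by omega)]
        · rw [if_neg (by omega), if_neg (by omega)]
  rw [hσ, key n le_rfl m, if_pos]
  have := m.isLt
  unfold cv; split_ifs <;> omega

lemma eta_pow_apply (η : Equiv.Perm (Fin (4 * n)))
    (hη : η = ((List.range (2 * n)).map f).formPerm *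
              ((List.range (2 * n)).map (fun k => f (2 * n + k))).formPerm)
    (k : ℕ) (hk : k ≤ 2*n) (m : Fin (4*n)) :
    (η^k) m = ⟨pv n k m.val, pv_lt hn hk m.isLt⟩ := by
  induction k with
  | zero =>
    apply Fin.ext
    have := m.isLt
    simp only [pow_zero, Equiv.Perm.one_apply, pv]
    split_ifs <;> omega
  | succ k ih =>
    rw [pow_succ', Equiv.Perm.mul_apply, ih (by omega), eta_apply hn f hf η hη]
    apply Fin.ext
    have := m.isLt
    simp only [ev, pv]
    split_ifs <;> omega

end
end DicyclicAux


/-- For `n ≥ 2`, relabelling `{1, …, 4n}` as `Fin (4n)` via `m ↦ m - 1`, the subgroup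
generated by the permutations `η = (1,2,…,2n)(2n+1,…,4n)` and
`σ = ∏_{k=1}^{n} (k, 4n+1-k, n+k, 3n+1-k)` is isomorphic to the dicyclic group `G_n`
(Mathlib's `QuaternionGroup n`) via an isomorphism sending `x = QuaternionGroup.a 1`
to `η` and `y = QuaternionGroup.xa 0` to `σ`. -/
theorem dicyclic_permutation_representation (n : ℕ) (hn : 2 ≤ n)
    (f : ℕ → Fin (4 * n)) (hf : ∀ m : ℕ, (f m : ℕ) = m % (4 * n))
    (η σ : Equiv.Perm (Fin (4 * n)))
    (hη : η = ((List.range (2 * n)).map f).formPerm *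
              ((List.range (2 * n)).map (fun k => f (2 * n + k))).formPerm)
    (hσ : σ = ((List.range n).map (fun k =>
              ([k, 4 * n - 1 - k, n + k, 3 * n - 1 - k].map f).formPerm)).prod) :
    ∃ φ : QuaternionGroup n →* Equiv.Perm (Fin (4 * n)),
      Function.Injective φ ∧
      φ (QuaternionGroup.a 1) = η ∧
      φ (QuaternionGroup.xa 0) = σ ∧
      φ.range = Subgroup.closure {η, σ} := by
  classical
  haveI : NeZero (2*n) := ⟨by omega⟩
  haveI : Fact (1 < 2*n) := ⟨by omega⟩
  have heta := DicyclicAux.eta_apply hn f hf η hη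
  have hsig := DicyclicAux.sigma_apply hn f hf σ hσ
  have hpow := DicyclicAux.eta_pow_apply hn f hf η hη
  have hη2n : η ^ (2*n) = 1 := by
    ext m
    rw [hpow (2*n) le_rfl m]
    have := m.isLt
    simp only [Equiv.Perm.one_apply, Fin.ext_iff, DicyclicAux.pv]
    split_ifs <;> omega
  have hmod : ∀ a : ℕ, η ^ a = η ^ (a % (2*n)) := by
    intro a
    conv_lhs => rw [← Nat.div_add_mod a (2*n)]
    rw [pow_add, pow_mul, hη2n, one_pow, one_mul]
  have hR : η * σ * η = σ := by
    ext m
    have := m.isLt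
    simp only [Equiv.Perm.mul_apply, heta, hsig, Fin.ext_iff, DicyclicAux.ev, DicyclicAux.sv]
    split_ifs <;> omega
  have hσ2 : σ * σ = η ^ n := by
    ext m
    have := m.isLt
    rw [hpow n (by omega) m]
    simp only [Equiv.Perm.mul_apply, hsig, Fin.ext_iff, DicyclicAux.sv, DicyclicAux.pv]
    split_ifs <;> omega
  have hcomm1 : η * σ = σ * η⁻¹ := by
    simpa [mul_assoc] using congrArg (· * η⁻¹) hR
  have hcomm : ∀ k : ℕ, η^k * σ = σ * (η^k)⁻¹ := by
    intro k
    induction k with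
    | zero => simp
    | succ k ih =>
      calc η^(k+1) * σ = η^k * (η * σ) := by rw [pow_succ, mul_assoc]
        _ = η^k * σ * η⁻¹ := by rw [hcomm1, mul_assoc]
        _ = σ * (η^k)⁻¹ * η⁻¹ := by rw [ih]
        _ = σ * (η^(k+1))⁻¹ := by rw [pow_succ', mul_inv_rev, mul_assoc]
  have hadd : ∀ i j : ZMod (2*n), η^(i.val) * η^(j.val) = η^((i+j).val) := by
    intro i j
    rw [← pow_add, hmod (i.val + j.val), ZMod.val_add]
  have hsub : ∀ i j : ZMod (2*n), (η^(i.val))⁻¹ * η^(j.val) = η^((j-i).val) := by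
    intro i j
    have h1 : η^(i.val) * η^((j-i).val) = η^(j.val) := by
      rw [hadd i (j-i)]
      congr 2
      ring
    rw [← h1, inv_mul_cancel_left]
  have hnval : ((n : ZMod (2*n))).val = n := by
    rw [ZMod.val_natCast, Nat.mod_eq_of_lt (by omega)]
  let φf : QuaternionGroup n → Equiv.Perm (Fin (4*n)) := fun g =>
    match g with
    | QuaternionGroup.a i => η ^ i.val
    | QuaternionGroup.xa i => σ * η ^ i.val
  have hmul : ∀ g₁ g₂, φf (g₁ * g₂) = φf g₁ * φf g₂ := by
    rintro (i | i) (j | j)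
    · show φf (QuaternionGroup.a (i + j)) = η ^ i.val * η ^ j.val
      rw [hadd]
    · show σ * η ^ ((j - i).val) = η ^ i.val * (σ * η ^ j.val)
      rw [← mul_assoc, hcomm i.val, mul_assoc, hsub]
    · show σ * η ^ ((i + j).val) = σ * η ^ i.val * η ^ j.val
      rw [mul_assoc, hadd]
    · show η ^ (((n : ZMod (2*n)) + j - i).val) = (σ * η ^ i.val) * (σ * η ^ j.val)
      have hσ2' : σ * σ = η ^ ((n : ZMod (2*n))).val := by rw [hnval]; exact hσ2
      calc η ^ (((n : ZMod (2*n)) + j - i).val)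
          = η ^ (((n : ZMod (2*n)) + (j - i)).val) := by congr 2; ring
        _ = η ^ ((n : ZMod (2*n))).val * η ^ ((j-i).val) := (hadd _ _).symm
        _ = σ * σ * ((η ^ i.val)⁻¹ * η ^ j.val) := by rw [hσ2', hsub]
        _ = (σ * η ^ i.val) * (σ * η ^ j.val) := by
            have h2 : (σ * η ^ i.val) * (σ * η ^ j.val) = σ * (η ^ i.val * σ) * η ^ j.val := by
              simp only [mul_assoc]
            rw [h2, hcomm i.val]
            simp only [mul_assoc]
  let φ : QuaternionGroup n →* Equiv.Perm (Fin (4*n)) := MonoidHom.mk' φf hmul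
  have hφa : ∀ i : ZMod (2*n), φ (QuaternionGroup.a i) = η ^ i.val := fun _ => rfl
  have hφxa : ∀ i : ZMod (2*n), φ (QuaternionGroup.xa i) = σ * η ^ i.val := fun _ => rfl
  have hφa1 : φ (QuaternionGroup.a 1) = η := by
    rw [hφa, ZMod.val_one, pow_one]
  have hφxa0 : φ (QuaternionGroup.xa 0) = σ := by
    rw [hφxa, ZMod.val_zero, pow_zero, mul_one]
  have hinj : Function.Injective φ := by
    rw [injective_iff_map_eq_one]
    rintro (i | i) h
    · rw [hφa] at h
      have hival : i.val < 2*n := i.val_lt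
      have h0 : (η ^ i.val) (⟨0, by omega⟩ : Fin (4*n)) = ⟨0, by omega⟩ := by rw [h]; rfl
      rw [hpow i.val (by omega)] at h0
      simp only [Fin.ext_iff, DicyclicAux.pv] at h0
      have : i.val = 0 := by split_ifs at h0 <;> omega
      have hi0 : i = 0 := by rwa [← ZMod.val_eq_zero]
      rw [hi0]
      rfl
    · rw [hφxa] at h
      have hival : i.val < 2*n := i.val_lt
      have h0 : (σ * η ^ i.val) (⟨0, by omega⟩ : Fin (4*n)) = ⟨0, by omega⟩ := by rw [h]; rfl
      rw [Equiv.Perm.mul_apply, hpow i.val (by omega), hsig] at h0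
      simp only [Fin.ext_iff, DicyclicAux.pv, DicyclicAux.sv] at h0
      exfalso
      split_ifs at h0 <;> omega
  have hrange : φ.range = Subgroup.closure {η, σ} := by
    apply le_antisymm
    · rintro x ⟨g, rfl⟩
      have hηc : η ∈ Subgroup.closure {η, σ} := Subgroup.subset_closure (Set.mem_insert _ _)
      have hσc : σ ∈ Subgroup.closure {η, σ} :=
        Subgroup.subset_closure (Set.mem_insert_of_mem _ rfl)
      cases g with
      | a i => exact pow_mem hηc _
      | xa i => exact mul_mem hσc (pow_mem hηc _)
    · rw [Subgroup.closure_le]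
      intro x hx
      simp only [Set.mem_insert_iff, Set.mem_singleton_iff] at hx
      rcases hx with rfl | rfl
      · exact ⟨QuaternionGroup.a 1, hφa1⟩
      · exact ⟨QuaternionGroup.xa 0, hφxa0⟩
  exact ⟨φ, hinj, hφa1, hφxa0, hrange⟩
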